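/- If R is a right Σ-V ring, then every finitely generated right R-module is directly finite, i.e., not isomorphic to any proper direct summand of itself. -/

import Mathlib

universe u

open MulOpposite

/-- A right `A`-module `M` is Σ-injective if the direct sum of any family of copies of `M`
is injective. -/
def IsSigmaInjective (A : Type u) [Ring A] (M : Type u) [AddCommGroup M] [Module A M] : Prop :=
  ∀ ι : Type u, Module.Injective A (ι →₀ M)

/-- `R` is a right Σ-V ring: every simple right `R`-module is Σ-injective.
Right `R`-modules are modules over `Rᵐᵒᵖ`. -/
def IsRightSigmaVRing (R : Type u) [Ring R] : Prop :=
  ∀ (S : Type u) [AddCommGroup S] [Module Rᵐᵒᵖ S],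
    IsSimpleModule Rᵐᵒᵖ S → IsSigmaInjective Rᵐᵒᵖ S

/-- A module `M` is directly finite (Dedekind finite) if whenever `M ≅ M ⊕ N`
for some module `N`, then `N = 0`. -/
def IsDirectlyFinite (A : Type u) [Ring A] (M : Type u) [AddCommGroup M] [Module A M] : Prop :=
  ∀ (N : Type u) [AddCommGroup N] [Module A N], Nonempty (M ≃ₗ[A] (M × N)) → Subsingleton N

/-- An infinite direct sum of copies of a nontrivial module is never finitely generated. -/
lemma not_finite_finsupp (A : Type u) [Ring A] (ι : Type u) [Infinite ι]
    (S : Type u) [AddCommGroup S] [Module A S] [Nontrivial S] :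
    ¬ Module.Finite A (ι →₀ S) := by
  intro hfin
  classical
  obtain ⟨t, ht⟩ := hfin.fg_top
  set T : Finset ι := t.sup Finsupp.support with hT
  have hle : (⊤ : Submodule A (ι →₀ S)) ≤ Finsupp.supported S A (↑T : Set ι) := by
    rw [← ht]
    apply Submodule.span_le.2
    intro x hx
    rw [SetLike.mem_coe, Finsupp.mem_supported]
    exact Finset.coe_subset.2 (Finset.le_sup (f := Finsupp.support) hx)
  obtain ⟨i, hi⟩ := Infinite.exists_notMem_finset T
  obtain ⟨s, hs⟩ := exists_ne (0 : S)
  have hmem := hle (Submodule.mem_top : Finsupp.single i s ∈ ⊤)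
  rw [Finsupp.mem_supported] at hmem
  have : i ∈ (Finsupp.single i s).support := by
    rw [Finsupp.mem_support_iff, Finsupp.single_eq_same]; exact hs
  exact hi (hmem this)

/-- If `R` is a right Σ-V ring, then every finitely generated right `R`-module is
directly finite. -/
theorem directlyFinite_of_rightSigmaV (R : Type u) [Ring R] (hR : IsRightSigmaVRing R)
    (M : Type u) [AddCommGroup M] [Module Rᵐᵒᵖ M] (hM : Module.Finite Rᵐᵒᵖ M) :
    IsDirectlyFinite Rᵐᵒᵖ M := by
  intro N _ _ ⟨e⟩
  by_contra hns
  rw [not_subsingleton_iff_nontrivial] at hns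
  -- `N` is finitely generated, being a quotient of `M`
  have hN : Module.Finite Rᵐᵒᵖ N :=
    Module.Finite.of_surjective ((LinearMap.snd Rᵐᵒᵖ M N).comp e.toLinearMap)
      (Prod.snd_surjective.comp e.surjective)
  -- pick a maximal submodule `m` of `N`, giving a simple quotient `S = N ⧸ m`
  have hco : IsCoatomic (Submodule Rᵐᵒᵖ N) :=
    CompleteLattice.coatomic_of_top_compact ((Submodule.fg_iff_compact _).mp hN.fg_top)
  obtain hbt | ⟨m, hm, -⟩ := hco.eq_top_or_exists_le_coatom (⊥ : Submodule Rᵐᵒᵖ N)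
  · obtain ⟨x, hx⟩ := exists_ne (0 : N)
    exact hx ((Submodule.mem_bot _).mp (hbt ▸ (Submodule.mem_top : x ∈ ⊤)))
  haveI hsimple : IsSimpleModule Rᵐᵒᵖ (N ⧸ m) := isSimpleModule_iff_isCoatom.mpr hm
  haveI : Nontrivial (N ⧸ m) := Submodule.Quotient.nontrivial_iff.mpr hm.1
  -- `S^(ℕ)` is injective
  have hS : Module.Injective Rᵐᵒᵖ (ULift.{u} ℕ →₀ N ⧸ m) :=
    hR (N ⧸ m) hsimple (ULift.{u} ℕ)
  -- the chain of embeddings of `N` into `M`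
  let j : ℕ → (N →ₗ[Rᵐᵒᵖ] M) := fun n =>
    Nat.rec (e.symm.toLinearMap ∘ₗ LinearMap.inr Rᵐᵒᵖ M N)
      (fun _ f => e.symm.toLinearMap ∘ₗ LinearMap.inl Rᵐᵒᵖ M N ∘ₗ f) n
  have hj0 : ∀ v : N, e (j 0 v) = (0, v) := by
    intro v; simp [j]
  have hjs : ∀ (n : ℕ) (v : N), e (j (n + 1) v) = (j n v, 0) := by
    intro n v; simp [j]
  -- the map `⊕ℕ N → M`
  let h : (ULift.{u} ℕ →₀ N) →ₗ[Rᵐᵒᵖ] M :=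
    Finsupp.lsum ℕ (fun i : ULift.{u} ℕ => j i.down)
  have hh : ∀ (i : ULift.{u} ℕ) (v : N), h (Finsupp.single i v) = j i.down v := by
    intro i v; simp [h]
  -- the shift map
  have hshinj : Function.Injective (fun i : ULift.{u} ℕ => ULift.up (i.down + 1)) := by
    intro a b hab
    have := congrArg ULift.down hab
    simp only at this
    exact ULift.ext a b (by omega)
  let sh : (ULift.{u} ℕ →₀ N) →ₗ[Rᵐᵒᵖ] (ULift.{u} ℕ →₀ N) :=
    Finsupp.lcomapDomain _ hshinj
  have hsh : ∀ (x : ULift.{u} ℕ →₀ N) (k : ℕ), sh x (ULift.up k) = x (ULift.up (k + 1)) := by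
    intro x k; rfl
  -- the key identity `e (h x) = (h (sh x), x 0)`
  have key : ∀ x : ULift.{u} ℕ →₀ N, e (h x) = (h (sh x), x (ULift.up 0)) := by
    have : (e.toLinearMap ∘ₗ h) =
        LinearMap.prod (h ∘ₗ sh) (Finsupp.lapply (ULift.up 0)) := by
      apply Finsupp.lhom_ext
      intro a v
      obtain ⟨n⟩ := a
      cases n with
      | zero =>
        have h1 : sh (Finsupp.single (ULift.up 0) v) = 0 := by
          ext ⟨k⟩
          rw [hsh]
          simp [Finsupp.single_apply]
        simp only [LinearMap.comp_apply, LinearMap.prod_apply, LinearEquiv.coe_coe,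
          Function.prod, Finsupp.lapply_apply, hh, h1, map_zero]
        rw [hj0]
        simp [h1]
      | succ n =>
        have h1 : sh (Finsupp.single (ULift.up (n + 1)) v) = Finsupp.single (ULift.up n) v := by
          ext ⟨k⟩
          rw [hsh]
          simp only [Finsupp.single_apply]
          by_cases hk : n = k
          · subst hk; simp
          · rw [if_neg (by simpa using hk), if_neg (by simp [ULift.ext_iff]; omega)]
        simp only [LinearMap.comp_apply, LinearMap.prod_apply, LinearEquiv.coe_coe,
          Function.prod, Finsupp.lapply_apply, hh, h1]
        rw [hjs]
        simp [Finsupp.single_apply, ULift.ext_iff, h1, hh]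
    intro x
    exact LinearMap.congr_fun this x
  -- `h` is injective
  have hker : ∀ (k : ℕ) (x : ULift.{u} ℕ →₀ N), h x = 0 → x (ULift.up k) = 0 := by
    intro k
    induction k with
    | zero =>
      intro x hx
      have := key x
      rw [hx, map_zero] at this
      exact (Prod.ext_iff.mp this.symm).2
    | succ k ih =>
      intro x hx
      have hkey := key x
      rw [hx, map_zero] at hkey
      have h0 : h (sh x) = 0 := congrArg Prod.fst hkey.symm
      have := ih (sh x) h0
      rw [hsh] at this
      exact this
  have hinj : Function.Injective h := by
    rw [← LinearMap.ker_eq_bot, LinearMap.ker_eq_bot']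
    intro x hx
    ext ⟨k⟩
    exact hker k x hx
  -- the surjection `⊕ℕ N → ⊕ℕ S`
  let p : (ULift.{u} ℕ →₀ N) →ₗ[Rᵐᵒᵖ] (ULift.{u} ℕ →₀ N ⧸ m) :=
    Finsupp.mapRange.linearMap m.mkQ
  have hp : Function.Surjective p :=
    Finsupp.mapRange_surjective _ (map_zero _) m.mkQ_surjective
  -- extend `p` along `h` using injectivity of `⊕ℕ S`
  obtain ⟨f, hf⟩ := hS.out h hinj p
  have hfsurj : Function.Surjective f := by
    intro y
    obtain ⟨z, hz⟩ := hp y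
    exact ⟨h z, by rw [hf]; exact hz⟩
  -- contradiction: `⊕ℕ S` would be finitely generated
  have : Module.Finite Rᵐᵒᵖ (ULift.{u} ℕ →₀ N ⧸ m) := Module.Finite.of_surjective f hfsurj
  exact not_finite_finsupp Rᵐᵒᵖ (ULift.{u} ℕ) (N ⧸ m) this
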